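/- Let g ∈ C²([a,b]) with m = min g'' and M = max g'' on [a,b]. Then for x_i ∈ [a,b] and positive weights p_i summing to 1: g(a) + g(b) − 2g((a+b)/2) + (M/4)[2 J − (b−a)²] ≤ ∑ p_i g(x_i) − g(∑ p_i x_i) ≤ g(a) + g(b) − 2g((a+b)/2) + (m/4)[2 J − (b−a)²], where J = ∑ p_i x_i² − (∑ p_i x_i)². -/

import Mathlib

open Set Finset

/-- Simić's converse of Jensen's inequality for convex functions on an interval. -/
lemma simic_converse {a b : ℝ} (hab : a ≤ b) {f : ℝ → ℝ}
    (hf : ConvexOn ℝ (Set.Icc a b) f) {n : ℕ} (p x : Fin n → ℝ)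
    (hp : ∀ i, 0 ≤ p i) (hps : ∑ i, p i = 1) (hx : ∀ i, x i ∈ Set.Icc a b) :
    ∑ i, p i * f (x i) - f (∑ i, p i * x i) ≤ f a + f b - 2 * f ((a + b) / 2) := by
  rcases eq_or_lt_of_le hab with rfl | hlt
  · have hxa : ∀ i, x i = a := fun i => le_antisymm (hx i).2 (hx i).1
    have h1 : ∑ i, p i * f (x i) = f a := by
      simp only [hxa, ← Finset.sum_mul, hps, one_mul]
    have h2 : ∑ i, p i * x i = a := by
      simp only [hxa, ← Finset.sum_mul, hps, one_mul]
    have : (a + a) / 2 = a := by ring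
    rw [h1, h2, this]; linarith
  · have hba : (0:ℝ) < b - a := by linarith
    set l : Fin n → ℝ := fun i => (b - x i) / (b - a) with hl
    have hl0 : ∀ i, 0 ≤ l i := fun i => div_nonneg (by linarith [(hx i).2]) hba.le
    have hl1 : ∀ i, l i ≤ 1 := fun i => by
      rw [div_le_one hba]; linarith [(hx i).1]
    have hcombo : ∀ i, x i = l i * a + (1 - l i) * b := by
      intro i; rw [hl]; field_simp; ring
    set L : ℝ := ∑ i, p i * l i with hL
    have hL0 : 0 ≤ L := Finset.sum_nonneg fun i _ => mul_nonneg (hp i) (hl0 i)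
    have hL1 : L ≤ 1 := by
      rw [← hps]; exact Finset.sum_le_sum fun i _ => by
        nlinarith [hp i, hl1 i, hl0 i]
    have ha : a ∈ Set.Icc a b := ⟨le_rfl, hab⟩
    have hb : b ∈ Set.Icc a b := ⟨hab, le_rfl⟩
    -- step 1 : weighted sum bound
    have step1 : ∑ i, p i * f (x i) ≤ L * f a + (1 - L) * f b := by
      have hpt : ∀ i, f (x i) ≤ l i * f a + (1 - l i) * f b := by
        intro i
        have := hf.2 ha hb (hl0 i) (show (0:ℝ) ≤ 1 - l i by linarith [hl1 i])
          (show l i + (1 - l i) = 1 by ring)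
        simpa [smul_eq_mul, ← hcombo i] using this
      calc ∑ i, p i * f (x i) ≤ ∑ i, p i * (l i * f a + (1 - l i) * f b) :=
            Finset.sum_le_sum fun i _ => mul_le_mul_of_nonneg_left (hpt i) (hp i)
        _ = ∑ i, (p i * l i * f a + (p i * f b - p i * l i * f b)) := by
            apply Finset.sum_congr rfl; intro i _; ring
        _ = (∑ i, p i * l i) * f a + ((∑ i, p i) * f b - (∑ i, p i * l i) * f b) := by
            rw [Finset.sum_add_distrib, Finset.sum_sub_distrib, ← Finset.sum_mul,
              ← Finset.sum_mul, ← Finset.sum_mul]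
        _ = L * f a + (1 - L) * f b := by rw [hps, ← hL]; ring
    -- the barycenter
    have hmean : ∑ i, p i * x i = L * a + (1 - L) * b := by
      calc ∑ i, p i * x i = ∑ i, (p i * l i * a + (p i * b - p i * l i * b)) := by
            apply Finset.sum_congr rfl; intro i _; rw [hcombo i]; ring
        _ = (∑ i, p i * l i) * a + ((∑ i, p i) * b - (∑ i, p i * l i) * b) := by
            rw [Finset.sum_add_distrib, Finset.sum_sub_distrib, ← Finset.sum_mul,
              ← Finset.sum_mul, ← Finset.sum_mul]
        _ = L * a + (1 - L) * b := by rw [hps, ← hL]; ring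
    set u : ℝ := L * a + (1 - L) * b with hu
    set v : ℝ := (1 - L) * a + L * b with hv
    have humem : u ∈ Set.Icc a b := ⟨by nlinarith, by nlinarith⟩
    have hvmem : v ∈ Set.Icc a b := ⟨by nlinarith, by nlinarith⟩
    have cmid : f ((a + b) / 2) ≤ (1/2) * f u + (1/2) * f v := by
      have := hf.2 humem hvmem (by norm_num : (0:ℝ) ≤ 1/2) (by norm_num : (0:ℝ) ≤ 1/2)
        (by norm_num)
      have heq : (1/2 : ℝ) • u + (1/2 : ℝ) • v = (a + b) / 2 := by
        simp only [smul_eq_mul, hu, hv]; ring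
      rw [heq] at this
      simpa [smul_eq_mul] using this
    have cv : f v ≤ (1 - L) * f a + L * f b := by
      have := hf.2 ha hb (show (0:ℝ) ≤ 1 - L by linarith) hL0
        (show (1 - L) + L = 1 by ring)
      simpa [smul_eq_mul, hv] using this
    rw [hmean]
    linarith

/-- Upper-bound half, for a function whose second derivative is bounded below by `m`. -/
lemma jensen_upper_aux
    {n : ℕ} {a b m : ℝ} (hab : a ≤ b)
    {g g' g'' : ℝ → ℝ}
    (hg' : ∀ t ∈ Set.Icc a b, HasDerivAt g (g' t) t)
    (hg'' : ∀ t ∈ Set.Icc a b, HasDerivAt g' (g'' t) t)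
    (hm : ∀ t ∈ Set.Icc a b, m ≤ g'' t)
    (p x : Fin n → ℝ)
    (hp : ∀ i, 0 ≤ p i) (hps : ∑ i, p i = 1)
    (hx : ∀ i, x i ∈ Set.Icc a b) :
    ∑ i, p i * g (x i) - g (∑ i, p i * x i) ≤
      g a + g b - 2 * g ((a + b) / 2) +
        (m / 4) * (2 * (∑ i, p i * (x i) ^ 2 - (∑ i, p i * x i) ^ 2) - (b - a) ^ 2) := by
  set h : ℝ → ℝ := fun t => g t - m / 2 * t ^ 2 with hh
  have hder : ∀ t ∈ Set.Icc a b, HasDerivAt h (g' t - m * t) t := by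
    intro t ht
    have h2 : HasDerivAt (fun t : ℝ => m / 2 * t ^ 2) (m * t) t := by
      have := (hasDerivAt_pow 2 t).const_mul (m / 2)
      refine this.congr_deriv ?_
      norm_num; ring
    exact (hg' t ht).sub h2
  have hder2 : ∀ t ∈ Set.Icc a b, HasDerivAt (fun t => g' t - m * t) (g'' t - m) t := by
    intro t ht
    have h2 : HasDerivAt (fun t : ℝ => m * t) m t := by
      simpa using (hasDerivAt_id t).const_mul m
    exact (hg'' t ht).sub h2
  have hconv : ConvexOn ℝ (Set.Icc a b) h := by
    apply convexOn_of_hasDerivWithinAt2_nonneg (convex_Icc a b)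
      (f' := fun t => g' t - m * t) (f'' := fun t => g'' t - m)
    · exact fun t ht => (hder t ht).continuousAt.continuousWithinAt
    · exact fun t ht => (hder t (interior_subset ht)).hasDerivWithinAt
    · exact fun t ht => (hder2 t (interior_subset ht)).hasDerivWithinAt
    · exact fun t ht => sub_nonneg.2 (hm t (interior_subset ht))
  have key := simic_converse hab hconv p x hp hps hx
  have expand : ∑ i, p i * h (x i) =
      ∑ i, p i * g (x i) - m / 2 * ∑ i, p i * (x i) ^ 2 := by
    rw [Finset.mul_sum, ← Finset.sum_sub_distrib]
    apply Finset.sum_congr rfl; intro i _; simp only [hh]; ring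
  rw [expand] at key
  simp only [hh] at key
  have midsq : m / 2 * a ^ 2 + m / 2 * b ^ 2 - 2 * (m / 2 * ((a + b) / 2) ^ 2)
      = m / 4 * (b - a) ^ 2 := by ring
  linarith

theorem jensen_nonconvex_converse
    (n : ℕ) (a b m M : ℝ) (hab : a ≤ b)
    (g g' g'' : ℝ → ℝ)
    (hg' : ∀ t ∈ Set.Icc a b, HasDerivAt g (g' t) t)
    (hg'' : ∀ t ∈ Set.Icc a b, HasDerivAt g' (g'' t) t)
    (hgc : ContinuousOn g'' (Set.Icc a b))
    (hm : ∀ t ∈ Set.Icc a b, m ≤ g'' t) (hm' : ∃ t ∈ Set.Icc a b, g'' t = m)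
    (hM : ∀ t ∈ Set.Icc a b, g'' t ≤ M) (hM' : ∃ t ∈ Set.Icc a b, g'' t = M)
    (p x : Fin n → ℝ)
    (hp : ∀ i, 0 < p i) (hps : ∑ i, p i = 1)
    (hx : ∀ i, x i ∈ Set.Icc a b) :
    g a + g b - 2 * g ((a + b) / 2) +
        (M / 4) * (2 * (∑ i, p i * (x i) ^ 2 - (∑ i, p i * x i) ^ 2) - (b - a) ^ 2) ≤
        ∑ i, p i * g (x i) - g (∑ i, p i * x i) ∧
      ∑ i, p i * g (x i) - g (∑ i, p i * x i) ≤
        g a + g b - 2 * g ((a + b) / 2) +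
          (m / 4) * (2 * (∑ i, p i * (x i) ^ 2 - (∑ i, p i * x i) ^ 2) - (b - a) ^ 2) := by
  have hp' : ∀ i, 0 ≤ p i := fun i => (hp i).le
  constructor
  · -- lower bound: apply the aux lemma to -g, whose second derivative -g'' is ≥ -M
    have hng' : ∀ t ∈ Set.Icc a b, HasDerivAt (fun t => -g t) (-g' t) t :=
      fun t ht => (hg' t ht).neg
    have hng'' : ∀ t ∈ Set.Icc a b, HasDerivAt (fun t => -g' t) (-g'' t) t :=
      fun t ht => (hg'' t ht).neg
    have hnm : ∀ t ∈ Set.Icc a b, -M ≤ -g'' t := fun t ht => neg_le_neg (hM t ht)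
    have key := jensen_upper_aux hab hng' hng'' hnm p x hp' hps hx
    simp only [mul_neg, Finset.sum_neg_distrib] at key
    linarith
  · exact jensen_upper_aux hab hg' hg'' hm p x hp' hps hx
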